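/- For each 1 ≤ i ≤ n-1, each A-module M, and each object X = (X_j, φ_j) of Mor_n(A), there is an isomorphism of abelian groups Hom_{Mor_n(A)}(p_i(M), X) ≅ Hom_A(M, Ker(φ_{n-i}⋯φ_{n-1})), natural in both positions. -/
import Mathlib


/-- The composite `φ_a φ_{a+1} ⋯ φ_{a+k-1} : X_{a+k} → X_a` of the structure maps;
`compSeg φ a 0 = id`,
`compSeg φ a (k+1) = compSeg φ a k ∘ φ_{a+k}`. -/
def compSeg {A : Type} [Ring A] {X : ℕ → Type} [∀ j, AddCommGroup (X j)]
    [∀ j, Module A (X j)] (φ : ∀ j, X (j + 1) →ₗ[A] X j) (a : ℕ) :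
    ∀ k, X (a + k) →ₗ[A] X a
  | 0 => LinearMap.id
  | k + 1 => (compSeg φ a k).comp (φ (a + k))

section aux
variable {A : Type} [Ring A] {X : ℕ → Type} [∀ j, AddCommGroup (X j)]
    [∀ j, Module A (X j)]

def castL {b c : ℕ} (h : b = c) : X b →ₗ[A] X c := h ▸ LinearMap.id

lemma castL_rfl_apply {b : ℕ} (h : b = b) (x : X b) : castL (X := X) (A := A) h x = x := rfl

lemma castL_cancel {b c : ℕ} (h : b = c) (h' : c = b) (x : X b) :
    castL (X := X) (A := A) h' (castL (X := X) (A := A) h x) = x := by subst h; rfl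

variable (φ : ∀ j, X (j + 1) →ₗ[A] X j)

lemma castL_phi_apply {b c : ℕ} (h : b = c) (h' : b + 1 = c + 1) (x : X (b + 1)) :
    φ c (castL (X := X) (A := A) h' x) = castL (X := X) (A := A) h (φ b x) := by
  subst h; rfl

lemma compSeg_succ_left (j : ℕ) :
    ∀ (k : ℕ) (h : j + (k + 1) = (j + 1) + k),
      (φ j).comp ((compSeg φ (j + 1) k).comp (castL (X := X) (A := A) h)) = compSeg φ j (k + 1)
  | 0, h => by ext x; rfl
  | (k + 1), h => by
      have h0 : j + (k + 1) = (j + 1) + k := by omega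
      ext x
      have e1 : φ ((j + 1) + k) (castL (X := X) (A := A) h x) = castL (X := X) (A := A) h0 (φ (j + (k + 1)) x) :=
        castL_phi_apply φ h0 h x
      calc φ j (compSeg φ (j + 1) k (φ ((j + 1) + k) (castL (X := X) (A := A) h x)))
          = φ j (compSeg φ (j + 1) k (castL (X := X) (A := A) h0 (φ (j + (k + 1)) x))) := by rw [e1]
        _ = compSeg φ j (k + 1) (φ (j + (k + 1)) x) :=
            LinearMap.congr_fun (compSeg_succ_left j k h0) _

variable {M : Type} [AddCommGroup M] [Module A M]

lemma key_step (m j k k' : ℕ) (u' : M →ₗ[A] X m) (hk : k' = k + 1)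
    (h1 : m = (j + 1) + k) (h2 : m = j + k') :
    (φ j).comp ((compSeg φ (j + 1) k).comp ((castL (X := X) (A := A) h1).comp u')) =
      (compSeg φ j k').comp ((castL (X := X) (A := A) h2).comp u') := by
  subst hk; subst h1
  ext x
  have e := LinearMap.congr_fun (compSeg_succ_left φ j k h2.symm) (castL (X := X) (A := A) h2 (u' x))
  simp only [LinearMap.comp_apply] at e ⊢
  rw [castL_cancel] at e
  rw [castL_rfl_apply]
  exact e

lemma compSeg_cast_eq (b k k' : ℕ) (hk : k' = k) (h : b + k = b + k')
    (u' : M →ₗ[A] X (b + k)) :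
    (compSeg φ b k').comp ((castL (X := X) (A := A) h).comp u') = (compSeg φ b k).comp u' := by
  subst hk; ext x; rw [LinearMap.comp_apply, LinearMap.comp_apply, castL_rfl_apply]; rfl

end aux

/-- Let `A` be an Artin algebra, `n ≥ 2`, `1 ≤ i ≤ n-1`, `M` an `A`-module and
`X = (X_j, φ_j)` an object of `Mor_n(A)`.  Write `a = n - i` (so `a + i = n`).  A morphism
`p_i(M) → X` is precisely a family `g_j : M → X_j` (`a+1 ≤ j ≤ n`, the components for
`j ≤ a` being `0`) with `φ_j ∘ g_{j+1} = g_j` and `φ_a ∘ g_{a+1} = 0`; the assignment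
`g ↦ g_n` is an (automatically additive and natural) injection whose image consists exactly
of the `A`-maps `u : M → X_n` with `(φ_{n-i}⋯φ_{n-1}) ∘ u = 0`, i.e.
`Hom_{Mor_n(A)}(p_i(M), X) ≅ Hom_A(M, Ker (φ_{n-i}⋯φ_{n-1}))`. -/
theorem stmt7 (R : Type) [CommRing R] [IsArtinianRing R]
    (A : Type) [Ring A] [Algebra R A] [Module.Finite R A]
    (n : ℕ) (hn : 2 ≤ n)
    (X : ℕ → Type) [∀ j, AddCommGroup (X j)] [∀ j, Module A (X j)]
    (φ : ∀ j, X (j + 1) →ₗ[A] X j)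
    (M : Type) [AddCommGroup M] [Module A M]
    (i a : ℕ) (hi1 : 1 ≤ i) (hi2 : i ≤ n - 1) (ha : a + i = n) :
    Function.Injective
      (fun g : {g : ∀ j, M →ₗ[A] X j //
          (∀ j, a + 1 ≤ j → j + 1 ≤ a + i → (φ j).comp (g (j + 1)) = g j) ∧
          ((φ a).comp (g (a + 1)) = 0) ∧
          (∀ j, j ≤ a ∨ a + i < j → g j = 0)} => g.1 (a + i)) ∧
    Set.range
      (fun g : {g : ∀ j, M →ₗ[A] X j //
          (∀ j, a + 1 ≤ j → j + 1 ≤ a + i → (φ j).comp (g (j + 1)) = g j) ∧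
          ((φ a).comp (g (a + 1)) = 0) ∧
          (∀ j, j ≤ a ∨ a + i < j → g j = 0)} => g.1 (a + i)) =
      {u : M →ₗ[A] X (a + i) | (compSeg φ a i).comp u = 0} := by
  constructor
  · -- injectivity
    rintro ⟨g₁, hg₁, hg₁', hz₁⟩ ⟨g₂, hg₂, hg₂', hz₂⟩ h
    have h : g₁ (a + i) = g₂ (a + i) := h
    apply Subtype.ext
    funext j
    have key : ∀ d j, j + d = a + i → a + 1 ≤ j → g₁ j = g₂ j := by
      intro d
      induction d with
      | zero =>
        intro j hj _
        have : j = a + i := by omega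
        subst this; exact h
      | succ d ih =>
        intro j hj hj2
        have e1 := hg₁ j hj2 (by omega)
        have e2 := hg₂ j hj2 (by omega)
        rw [← e1, ← e2, ih (j + 1) (by omega) (by omega)]
    show g₁ j = g₂ j
    by_cases hc : j ≤ a ∨ a + i < j
    · rw [hz₁ j hc, hz₂ j hc]
    · exact key (a + i - j) j (by omega) (by omega)
  · -- range
    ext u
    simp only [Set.mem_range, Set.mem_setOf_eq]
    constructor
    · rintro ⟨⟨g, hg, hg', hz⟩, rfl⟩
      show (compSeg φ a i).comp (g (a + i)) = 0
      have key : ∀ k, 1 ≤ k → k ≤ i → (compSeg φ a k).comp (g (a + k)) = 0 := by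
        intro k
        induction k with
        | zero => intro h; omega
        | succ k ih =>
          intro _ hk
          by_cases hk0 : k = 0
          · subst hk0
            ext x
            exact LinearMap.congr_fun hg' x
          · have e : (φ (a + k)).comp (g (a + (k + 1))) = g (a + k) :=
              hg (a + k) (by omega) (by omega)
            calc (compSeg φ a (k + 1)).comp (g (a + (k + 1)))
                = (compSeg φ a k).comp ((φ (a + k)).comp (g (a + (k + 1)))) := by
                  ext x; rfl
              _ = (compSeg φ a k).comp (g (a + k)) := by rw [e]
              _ = 0 := ih (by omega) (by omega)
      exact key i hi1 le_rfl
    · intro hu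
      refine ⟨⟨fun j => if hj : a + 1 ≤ j ∧ j ≤ a + i then
          (compSeg φ j (a + i - j)).comp
            ((castL (X := X) (A := A) (show a + i = j + (a + i - j) by omega)).comp u)
        else 0, ?_, ?_, ?_⟩, ?_⟩
      · intro j h1 h2
        beta_reduce
        rw [dif_pos (⟨by omega, h2⟩ : a + 1 ≤ j + 1 ∧ j + 1 ≤ a + i),
            dif_pos (⟨h1, by omega⟩ : a + 1 ≤ j ∧ j ≤ a + i)]
        exact key_step φ (a + i) j (a + i - (j + 1)) (a + i - j) u (by omega) _ _
      · beta_reduce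
        rw [dif_pos (⟨le_rfl, by omega⟩ : a + 1 ≤ a + 1 ∧ a + 1 ≤ a + i)]
        have e := key_step φ (a + i) a (a + i - (a + 1)) (a + i - a) u (by omega)
          (show a + i = (a + 1) + (a + i - (a + 1)) by omega)
          (show a + i = a + (a + i - a) by omega)
        exact e.trans ((compSeg_cast_eq φ a i (a + i - a) (by omega) _ u).trans hu)
      · intro j hj
        exact dif_neg (by omega)
      · show (if hj : a + 1 ≤ a + i ∧ a + i ≤ a + i then _ else _) = u
        rw [dif_pos (⟨by omega, le_rfl⟩ : a + 1 ≤ a + i ∧ a + i ≤ a + i)]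
        exact (compSeg_cast_eq φ (a + i) 0 (a + i - (a + i)) (by omega) _ u).trans
          (LinearMap.id_comp u)
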